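/- Let M, K ∈ ℝ^{n×n} be symmetric positive definite, B ∈ ℝ^{n}, ω > 0 with K − ω²M invertible, and Λ ∈ ℝ^{q×q} symmetric PSD. If x̄ ∈ ℂ^{nq} satisfies ((I_q ⊗ (K − ω²M)) + (Λ ⊗ BBᵀ)) x̄ = 0, then with ȳ = (I_q ⊗ Bᵀ)x̄ and α = Bᵀ(K − ω²M)⁻¹B, one has (I_q + αΛ) ȳ = 0; hence if ȳ ≠ 0 then α ≠ 0 and −1/α is an eigenvalue of Λ with eigenvector ȳ. -/

import Mathlib

open Matrix Kronecker in
theorem kernel_vector_gives_Lambda_eigenvector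
    (n q : ℕ)
    (M K : Matrix (Fin n) (Fin n) ℝ)
    (hM : M.PosDef) (hK : K.PosDef)
    (B : Fin n → ℝ) (ω : ℝ) (hω : 0 < ω)
    (hinv : IsUnit (K - ω ^ 2 • M))
    (Λ : Matrix (Fin q) (Fin q) ℝ) (hΛ : Λ.PosSemidef)
    (xbar : Fin q × Fin n → ℂ)
    (hx : (((1 : Matrix (Fin q) (Fin q) ℝ) ⊗ₖ (K - ω ^ 2 • M) +
            Λ ⊗ₖ Matrix.vecMulVec B B).map Complex.ofReal).mulVec xbar = 0)
    (ybar : Fin q → ℂ) (hy : ∀ i, ybar i = ∑ k, (B k : ℂ) * xbar (i, k))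
    (α : ℝ) (hα : α = B ⬝ᵥ (K - ω ^ 2 • M)⁻¹.mulVec B) :
    ((1 : Matrix (Fin q) (Fin q) ℂ) + (α : ℂ) • Λ.map Complex.ofReal).mulVec ybar = 0 ∧
      (ybar ≠ 0 → α ≠ 0 ∧
        (Λ.map Complex.ofReal).mulVec ybar = ((-1 / α : ℝ) : ℂ) • ybar) := by
  set A : Matrix (Fin n) (Fin n) ℝ := K - ω ^ 2 • M with hAdef
  set Aℂ : Matrix (Fin n) (Fin n) ℂ := A.map Complex.ofReal with hAC
  have hAℂ : IsUnit Aℂ := hinv.map (Complex.ofRealHom.mapMatrix)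
  set z : Fin n → ℝ := A⁻¹.mulVec B with hz
  have hAz : A.mulVec z = B := by
    rw [hz, Matrix.mulVec_mulVec, Matrix.mul_nonsing_inv _ ((Matrix.isUnit_iff_isUnit_det A).mp hinv), Matrix.one_mulVec]
  set Bℂ : Fin n → ℂ := fun k => (B k : ℂ) with hBC
  set zℂ : Fin n → ℂ := fun k => (z k : ℂ) with hzC
  have hAzℂ : Aℂ.mulVec zℂ = Bℂ := by
    funext k
    have h1 := (RingHom.map_mulVec Complex.ofRealHom A z k)
    have h2 : Complex.ofRealHom ((A *ᵥ z) k) = Complex.ofRealHom (B k) := by rw [hAz]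
    rw [h1] at h2
    exact h2
  set g : Fin q → ℂ := (Λ.map Complex.ofReal).mulVec ybar with hg
  have hginj := Matrix.mulVec_injective_iff_isUnit.mpr hAℂ
  -- key block equation
  have hblock : ∀ i, (fun k => xbar (i, k)) = fun k => -(g i) * zℂ k := by
    intro i
    apply hginj
    funext k
    have h0 := congrFun hx (i, k)
    simp only [Matrix.mulVec, dotProduct, Pi.zero_apply, Matrix.map_apply,
      Matrix.add_apply, Matrix.kroneckerMap_apply, Matrix.one_apply, Matrix.vecMulVec_apply] at h0
    rw [Fintype.sum_prod_type] at h0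
    have inner : ∀ j, (∑ l, (((if i = j then 1 else 0) * A k l + Λ i j * (B k * B l) : ℝ) : ℂ) * xbar (j, l))
        = (if i = j then ∑ l, (A k l : ℂ) * xbar (j, l) else 0) + (Λ i j : ℂ) * ybar j * Bℂ k := by
      intro j
      rw [hy j, Finset.mul_sum, Finset.sum_mul]
      by_cases hij : i = j
      · simp only [if_pos hij]
        rw [← Finset.sum_add_distrib]
        apply Finset.sum_congr rfl
        intro l _
        push_cast
        ring
      · simp only [if_neg hij]
        rw [zero_add]
        apply Finset.sum_congr rfl
        intro l _
        push_cast
        ring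
    have h0' : (∑ l, (A k l : ℂ) * xbar (i, l)) +
        (∑ j, (Λ i j : ℂ) * ybar j) * Bℂ k = 0 := by
      rw [← h0, Finset.sum_congr rfl (fun j _ => inner j), Finset.sum_add_distrib]
      rw [Finset.sum_ite_eq Finset.univ i (fun j => ∑ l, (A k l : ℂ) * xbar (j, l))]
      rw [← Finset.sum_mul]
      simp
    have hAx : (Aℂ.mulVec fun k => xbar (i,k)) k = ∑ l, (A k l : ℂ) * xbar (i, l) := by
      simp [Matrix.mulVec, dotProduct, hAC]
    have hgz : (Aℂ.mulVec fun k => -(g i) * zℂ k) k = -(g i) * Bℂ k := by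
      have : (fun k => -(g i) * zℂ k) = (-(g i)) • zℂ := by funext k; simp [smul_eq_mul]
      rw [this, Matrix.mulVec_smul, hAzℂ]; simp
    rw [hAx, hgz]
    have hgi : g i = ∑ j, (Λ i j : ℂ) * ybar j := by
      simp [hg, Matrix.mulVec, dotProduct, Matrix.map_apply]
    rw [hgi]
    have := h0'
    linear_combination this
  -- y_i = -(g i) * α
  have hαℂ : (α : ℂ) = ∑ k, Bℂ k * zℂ k := by
    rw [hα, hz]
    push_cast [dotProduct]
    rfl
  have hyi : ∀ i, ybar i = -(g i) * (α : ℂ) := by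
    intro i
    rw [hy i, hαℂ]
    rw [Finset.mul_sum]
    congr 1
    funext k
    rw [congrFun (hblock i) k]
    ring
  have hmain : ((1 : Matrix (Fin q) (Fin q) ℂ) + (α : ℂ) • Λ.map Complex.ofReal).mulVec ybar = 0 := by
    funext i
    rw [Matrix.add_mulVec, Matrix.one_mulVec, Matrix.smul_mulVec]
    simp only [← hg, Pi.add_apply, Pi.smul_apply, Pi.zero_apply, smul_eq_mul]
    rw [hyi i]
    ring
  refine ⟨hmain, fun hynz => ?_⟩
  have hαne : α ≠ 0 := by
    intro h0
    apply hynz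
    funext i
    rw [hyi i, h0]
    simp
  refine ⟨hαne, ?_⟩
  funext i
  have hcast : ((-1 / α : ℝ) : ℂ) = -1 / (α : ℂ) := by push_cast; ring
  have hαc : (α : ℂ) ≠ 0 := by exact_mod_cast hαne
  rw [hcast]
  simp only [Pi.smul_apply, smul_eq_mul]
  rw [hyi i]
  field_simp
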